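/- Let 1/4 < α < 1/2, κ > 0, and h as above. Then lim_{t→+∞} (t - h(t))/t^{4α-1} = κα²/(4α-1). -/

import Mathlib

open Real Filter MeasureTheory Set

/-- The change-of-variable function `g` (inverse of `h`). -/
noncomputable def gfun (κ α : ℝ) (u : ℝ) : ℝ :=
  ∫ s in (0:ℝ)..u, Real.sqrt (1 + 2*κ*α^2 * |s| ^ (2*(2*α-1)))

lemma sqrt_one_add_le {x : ℝ} (hx : 0 ≤ x) : Real.sqrt (1 + x) ≤ 1 + x/2 := by
  rw [show (1:ℝ) + x/2 = Real.sqrt ((1+x/2)^2) by rw [Real.sqrt_sq (by linarith)]]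
  apply Real.sqrt_le_sqrt; nlinarith

lemma le_sqrt_one_add {x : ℝ} (hx : 0 ≤ x) : 1 + x/2 - x^2/8 ≤ Real.sqrt (1 + x) := by
  rcases le_or_gt (1 + x/2 - x^2/8) 0 with hc | hc
  · exact hc.trans (Real.sqrt_nonneg _)
  · rw [← Real.sqrt_sq hc.le]
    apply Real.sqrt_le_sqrt
    have h8 : x ≤ 8 := by nlinarith
    nlinarith [mul_nonneg (mul_nonneg (mul_nonneg hx hx) hx) (by linarith : (0:ℝ) ≤ 8 - x)]

lemma sqrt_one_add_le' {x : ℝ} (hx : 0 ≤ x) : Real.sqrt (1 + x) ≤ 1 + Real.sqrt x := by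
  rw [show (1:ℝ) + Real.sqrt x = Real.sqrt ((1 + Real.sqrt x)^2) by
    rw [Real.sqrt_sq (by positivity)]]
  apply Real.sqrt_le_sqrt
  nlinarith [Real.sq_sqrt hx, Real.sqrt_nonneg x]

lemma one_le_sqrt_one_add {x : ℝ} (hx : 0 ≤ x) : 1 ≤ Real.sqrt (1 + x) :=
  (Real.le_sqrt zero_le_one (by linarith)).mpr (by nlinarith)

lemma integrable_aux {c p : ℝ} (hc : 0 ≤ c) (hp : -2 < p) {u : ℝ} (hu : 0 ≤ u) :
    IntervalIntegrable (fun s => Real.sqrt (1 + c * |s| ^ p)) volume 0 u := by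
  rw [intervalIntegrable_iff, uIoc_of_le hu]
  have hG : IntegrableOn (fun s : ℝ => 1 + Real.sqrt c * s ^ (p/2)) (Ioc 0 u) volume := by
    rw [← uIoc_of_le hu, ← intervalIntegrable_iff]
    exact intervalIntegrable_const.add
      ((intervalIntegral.intervalIntegrable_rpow' (by linarith)).const_mul _)
  apply Integrable.mono' hG (Measurable.aestronglyMeasurable (by fun_prop))
  filter_upwards [ae_restrict_mem measurableSet_Ioc] with s hs
  have hs0 : 0 < s := hs.1
  have h1 : (0:ℝ) ≤ c * |s| ^ p := by positivity
  rw [Real.norm_eq_abs, abs_of_nonneg (Real.sqrt_nonneg _)]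
  calc Real.sqrt (1 + c * |s| ^ p) ≤ 1 + Real.sqrt (c * |s| ^ p) := sqrt_one_add_le' h1
    _ = 1 + Real.sqrt c * s ^ (p/2) := by
        have : Real.sqrt (s ^ p) = s ^ (p/2) := by
          rw [Real.sqrt_eq_rpow, ← Real.rpow_mul hs0.le]; ring_nf
        rw [Real.sqrt_mul hc, abs_of_pos hs0, this]

section
variable {κ α : ℝ} (hκ : 0 < κ) (hα0 : 1/4 < α) (hα1 : α < 1/2)

include hκ hα0 hα1 in
lemma phi_int {u : ℝ} (hu : 0 ≤ u) :
    IntervalIntegrable (fun s => Real.sqrt (1 + 2*κ*α^2 * |s| ^ (2*(2*α-1)))) volume 0 u :=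
  integrable_aux (by positivity) (by linarith) hu

include hκ hα0 hα1 in
lemma gfun_ge {u : ℝ} (hu : 0 ≤ u) : u ≤ gfun κ α u := by
  have h1 : (∫ s in (0:ℝ)..u, (1:ℝ)) ≤ gfun κ α u := by
    apply intervalIntegral.integral_mono_on hu intervalIntegrable_const (phi_int hκ hα0 hα1 hu)
    intro s _
    exact one_le_sqrt_one_add (by positivity)
  simpa using h1

include hκ hα0 hα1 in
lemma gfun_le_zero {u : ℝ} (hu : u ≤ 0) : gfun κ α u ≤ 0 := by
  rw [gfun, intervalIntegral.integral_symm]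
  simp only [neg_nonpos]
  apply intervalIntegral.integral_nonneg hu
  intro s _; positivity

include hκ hα0 hα1 in
lemma gfun_mono {a b : ℝ} (ha : 0 ≤ a) (hab : a ≤ b) : gfun κ α a ≤ gfun κ α b := by
  have hb : 0 ≤ b := ha.trans hab
  have hint := phi_int hκ hα0 hα1 hb
  have h1 : IntervalIntegrable (fun s => Real.sqrt (1 + 2*κ*α^2 * |s| ^ (2*(2*α-1)))) volume 0 a :=
    hint.mono_set (by rw [uIcc_of_le ha, uIcc_of_le hb]; exact Icc_subset_Icc le_rfl hab)
  have h2 : IntervalIntegrable (fun s => Real.sqrt (1 + 2*κ*α^2 * |s| ^ (2*(2*α-1)))) volume a b :=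
    hint.mono_set (by rw [uIcc_of_le hab, uIcc_of_le hb]; exact Icc_subset_Icc ha le_rfl)
  have := intervalIntegral.integral_add_adjacent_intervals h1 h2
  have hpos : 0 ≤ ∫ s in a..b, Real.sqrt (1 + 2*κ*α^2 * |s| ^ (2*(2*α-1))) := by
    apply intervalIntegral.integral_nonneg hab; intro s _; positivity
  rw [gfun, gfun, ← this]; linarith

include hκ hα0 hα1 in
lemma tendsto_h (h : ℝ → ℝ) (hinv2 : Function.RightInverse h (gfun κ α)) :
    Tendsto h atTop atTop := by
  apply tendsto_atTop_atTop.mpr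
  intro b
  rcases le_or_gt b 0 with hb | hb
  · refine ⟨1, fun t ht => ?_⟩
    by_contra hcon
    push_neg at hcon
    have := gfun_le_zero hκ hα0 hα1 (le_of_lt (hcon.trans_le hb))
    rw [hinv2 t] at this; linarith
  · refine ⟨max (gfun κ α b) 0 + 1, fun t ht => ?_⟩
    have ht0 : 0 < t := by
      have := le_max_right (gfun κ α b) 0; linarith
    have hht : 0 < h t := by
      by_contra hcon
      push_neg at hcon
      have := gfun_le_zero hκ hα0 hα1 hcon
      rw [hinv2 t] at this; linarith
    by_contra hcon
    push_neg at hcon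
    have := gfun_mono hκ hα0 hα1 hht.le hcon.le
    rw [hinv2 t] at this
    have := le_max_left (gfun κ α b) 0
    linarith

include hκ hα0 hα1 in
lemma map_gfun (h : ℝ → ℝ) (hinv2 : Function.RightInverse h (gfun κ α)) :
    map (gfun κ α) atTop = atTop := by
  apply le_antisymm
  · exact tendsto_atTop_mono' atTop
      (by filter_upwards [eventually_ge_atTop (0:ℝ)] with u hu; exact gfun_ge hκ hα0 hα1 hu)
      tendsto_id
  · have hid : (fun t => gfun κ α (h t)) = id := funext fun t => hinv2 t
    calc atTop = map (fun t => gfun κ α (h t)) atTop := by rw [hid, map_id]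
    _ = map (gfun κ α) (map h atTop) := by rw [map_map]; rfl
    _ ≤ map (gfun κ α) atTop := map_mono (tendsto_h hκ hα0 hα1 h hinv2)

include hκ hα0 hα1 in
lemma key_bounds {u : ℝ} (hu : 1 ≤ u) :
    gfun κ α 1 - 1 + (κ*α^2)*((u^(2*(2*α-1)+1)-1)/(2*(2*α-1)+1))
      - ((2*κ*α^2)^2/8)*((u^(max (2*(2*(2*α-1))) ((2*(2*α-1)-1)/2) +1)-1)/(max (2*(2*(2*α-1))) ((2*(2*α-1)-1)/2) +1))
      ≤ gfun κ α u - u ∧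
    gfun κ α u - u ≤ gfun κ α 1 - 1 + (κ*α^2)*((u^(2*(2*α-1)+1)-1)/(2*(2*α-1)+1)) := by
  set c : ℝ := 2*κ*α^2 with hc_def
  set p : ℝ := 2*(2*α-1) with hp_def
  set q : ℝ := max (2*p) ((p-1)/2) with hq_def
  have hc : 0 < c := by positivity
  have hp1 : -1 < p := by rw [hp_def]; linarith
  have hp0 : p < 0 := by rw [hp_def]; linarith
  have hq1 : -1 < q := lt_max_of_lt_right (by linarith)
  have hq2p : 2*p ≤ q := le_max_left _ _
  have hu0 : (0:ℝ) ≤ u := by linarith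
  set φ : ℝ → ℝ := fun s => Real.sqrt (1 + c * |s| ^ p) with hφ_def
  have hφint : IntervalIntegrable φ volume 1 u :=
    (phi_int hκ hα0 hα1 hu0).mono_set
      (by rw [uIcc_of_le hu, uIcc_of_le hu0]; exact Icc_subset_Icc zero_le_one le_rfl)
  have hpow_int : ∀ r : ℝ, IntervalIntegrable (fun s : ℝ => s ^ r) volume 1 u := by
    intro r
    apply ContinuousOn.intervalIntegrable
    apply ContinuousOn.rpow_const continuousOn_id
    intro x hx
    rw [uIcc_of_le hu] at hx
    exact Or.inl (by simp only [id]; intro h0; rw [h0] at hx; linarith [hx.1])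
  have hup_int : IntervalIntegrable (fun s : ℝ => 1 + c/2 * s ^ p) volume 1 u :=
    intervalIntegrable_const.add ((hpow_int p).const_mul _)
  have hlo_int : IntervalIntegrable (fun s : ℝ => 1 + c/2 * s ^ p - c^2/8 * s ^ q) volume 1 u :=
    hup_int.sub ((hpow_int q).const_mul _)
  have hsplit : gfun κ α u = gfun κ α 1 + ∫ s in (1:ℝ)..u, φ s := by
    rw [gfun, gfun]
    rw [← intervalIntegral.integral_add_adjacent_intervals
      (phi_int hκ hα0 hα1 zero_le_one) hφint]
  have hptU : ∀ s ∈ Icc (1:ℝ) u, φ s ≤ 1 + c/2 * s ^ p := by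
    intro s hs
    have hs1 : (1:ℝ) ≤ s := hs.1
    have habs : |s| = s := abs_of_pos (by linarith)
    have hx : (0:ℝ) ≤ c * s ^ p := by positivity
    calc φ s = Real.sqrt (1 + c * s ^ p) := by rw [hφ_def]; simp [habs]
    _ ≤ 1 + (c * s ^ p)/2 := sqrt_one_add_le hx
    _ = 1 + c/2 * s ^ p := by ring
  have hptL : ∀ s ∈ Icc (1:ℝ) u, 1 + c/2 * s ^ p - c^2/8 * s ^ q ≤ φ s := by
    intro s hs
    have hs1 : (1:ℝ) ≤ s := hs.1
    have habs : |s| = s := abs_of_pos (by linarith)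
    have hx : (0:ℝ) ≤ c * s ^ p := by positivity
    have h2p : (s ^ p)^2 = s ^ (2*p) := by
      rw [← Real.rpow_natCast (s ^ p) 2, ← Real.rpow_mul (by linarith)]
      norm_num; ring_nf
    have hqp : s ^ (2*p) ≤ s ^ q := Real.rpow_le_rpow_of_exponent_le hs1 hq2p
    calc 1 + c/2 * s ^ p - c^2/8 * s ^ q
        ≤ 1 + (c * s ^ p)/2 - (c * s ^ p)^2/8 := by
          have : (c * s ^ p)^2 = c^2 * s ^ (2*p) := by rw [mul_pow, h2p]
          rw [this]; nlinarith [sq_nonneg c]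
    _ ≤ Real.sqrt (1 + c * s ^ p) := le_sqrt_one_add hx
    _ = φ s := by rw [hφ_def]; simp [habs]
  have hIp : (∫ s in (1:ℝ)..u, s ^ p) = (u ^ (p+1) - 1)/(p+1) := by
    rw [integral_rpow (Or.inl hp1), Real.one_rpow]
  have hIq : (∫ s in (1:ℝ)..u, s ^ q) = (u ^ (q+1) - 1)/(q+1) := by
    rw [integral_rpow (Or.inl hq1), Real.one_rpow]
  have hIU : (∫ s in (1:ℝ)..u, (1 + c/2 * s ^ p)) = (u - 1) + c/2 * ((u ^ (p+1) - 1)/(p+1)) := by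
    rw [intervalIntegral.integral_add intervalIntegrable_const ((hpow_int p).const_mul _),
      intervalIntegral.integral_const_mul, hIp]
    simp
  have hIL : (∫ s in (1:ℝ)..u, (1 + c/2 * s ^ p - c^2/8 * s ^ q))
      = (u - 1) + c/2 * ((u ^ (p+1) - 1)/(p+1)) - c^2/8 * ((u ^ (q+1) - 1)/(q+1)) := by
    rw [intervalIntegral.integral_sub hup_int ((hpow_int q).const_mul _),
      intervalIntegral.integral_const_mul, hIU, hIq]
  have hU : (∫ s in (1:ℝ)..u, φ s) ≤ (u - 1) + c/2 * ((u ^ (p+1) - 1)/(p+1)) := by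
    rw [← hIU]
    exact intervalIntegral.integral_mono_on hu hφint hup_int hptU
  have hL : (u - 1) + c/2 * ((u ^ (p+1) - 1)/(p+1)) - c^2/8 * ((u ^ (q+1) - 1)/(q+1))
      ≤ ∫ s in (1:ℝ)..u, φ s := by
    rw [← hIL]
    exact intervalIntegral.integral_mono_on hu hlo_int hφint hptL
  constructor
  · rw [hsplit]
    have : κ*α^2 = c/2 := by rw [hc_def]; ring
    rw [this]
    linarith
  · rw [hsplit]
    have : κ*α^2 = c/2 := by rw [hc_def]; ring
    rw [this]
    linarith

include hκ hα0 hα1 in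
lemma glimit :
    Tendsto (fun u : ℝ => (gfun κ α u - u) / u ^ (4*α-1)) atTop
      (nhds (κ*α^2/(4*α-1))) := by
  set P : ℝ := 4*α-1 with hP_def
  set Q : ℝ := max (2*(2*(2*α-1))) ((2*(2*α-1)-1)/2) + 1 with hQ_def
  have hP : 0 < P := by rw [hP_def]; linarith
  have hQ : 0 < Q := by
    have : (2*(2*α-1)-1)/2 ≤ max (2*(2*(2*α-1))) ((2*(2*α-1)-1)/2) := le_max_right _ _
    rw [hQ_def]; nlinarith [this]
  have hQP : Q - P < 0 := by
    have h1 : 2*(2*(2*α-1)) < 2*(2*α-1) := by nlinarith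
    have h2 : (2*(2*α-1)-1)/2 < 2*(2*α-1) := by nlinarith
    have : max (2*(2*(2*α-1))) ((2*(2*α-1)-1)/2) < 2*(2*α-1) := max_lt h1 h2
    rw [hQ_def, hP_def]; nlinarith [this]
  set K : ℝ := gfun κ α 1 - 1 with hK_def
  set M : ℝ := κ*α^2 with hM_def
  set N : ℝ := (2*κ*α^2)^2/8 with hN_def
  have t1 : Tendsto (fun u : ℝ => u ^ (-P)) atTop (nhds 0) := tendsto_rpow_neg_atTop hP
  have t2 : Tendsto (fun u : ℝ => u ^ (Q-P)) atTop (nhds 0) := by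
    have h : Q - P = -(P - Q) := by ring
    rw [h]; exact tendsto_rpow_neg_atTop (by linarith)
  have hlim_lo : Tendsto (fun u : ℝ =>
      (K + M*((u^P-1)/P) - N*((u^Q-1)/Q)) / u^P) atTop (nhds (M/P)) := by
    have hev : ∀ᶠ u : ℝ in atTop, K*u^(-P) + M/P - (M/P)*u^(-P) - (N/Q)*u^(Q-P) + (N/Q)*u^(-P)
        = (K + M*((u^P-1)/P) - N*((u^Q-1)/Q)) / u^P := by
      filter_upwards [eventually_gt_atTop (0:ℝ)] with u hu
      have h1 : u ^ P ≠ 0 := ne_of_gt (Real.rpow_pos_of_pos hu _)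
      have h2 : u ^ (-P) = (u^P)⁻¹ := by simp [Real.rpow_neg hu.le]
      have h3 : u ^ (Q-P) = u^Q / u^P := Real.rpow_sub hu Q P
      rw [h2, h3]
      field_simp
      ring
    apply Tendsto.congr' hev
    have : Tendsto (fun u : ℝ =>
        K*u^(-P) + M/P - (M/P)*u^(-P) - (N/Q)*u^(Q-P) + (N/Q)*u^(-P)) atTop
        (nhds (K*0 + M/P - (M/P)*0 - (N/Q)*0 + (N/Q)*0)) :=
      ((((t1.const_mul K).add_const (M/P)).sub (t1.const_mul (M/P))).sub
        (t2.const_mul (N/Q))).add (t1.const_mul (N/Q))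
    simpa using this
  have hlim_hi : Tendsto (fun u : ℝ =>
      (K + M*((u^P-1)/P)) / u^P) atTop (nhds (M/P)) := by
    have hev : ∀ᶠ u : ℝ in atTop, K*u^(-P) + M/P - (M/P)*u^(-P)
        = (K + M*((u^P-1)/P)) / u^P := by
      filter_upwards [eventually_gt_atTop (0:ℝ)] with u hu
      have h1 : u ^ P ≠ 0 := ne_of_gt (Real.rpow_pos_of_pos hu _)
      have h2 : u ^ (-P) = (u^P)⁻¹ := by simp [Real.rpow_neg hu.le]
      rw [h2]; field_simp; ring
    apply Tendsto.congr' hev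
    have : Tendsto (fun u : ℝ => K*u^(-P) + M/P - (M/P)*u^(-P)) atTop
        (nhds (K*0 + M/P - (M/P)*0)) :=
      ((t1.const_mul K).add_const (M/P)).sub (t1.const_mul (M/P))
    simpa using this
  have hMP : M/P = κ*α^2/(4*α-1) := by rw [hM_def, hP_def]
  rw [← hMP]
  apply tendsto_of_tendsto_of_tendsto_of_le_of_le' hlim_lo hlim_hi
  · filter_upwards [eventually_ge_atTop (1:ℝ)] with u hu
    have kb := (key_bounds hκ hα0 hα1 hu).1
    have he : 2*(2*α-1)+1 = P := by rw [hP_def]; ring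
    rw [he] at kb
    have hup : 0 < u ^ P := Real.rpow_pos_of_pos (by linarith) _
    exact (div_le_div_iff_of_pos_right hup).mpr kb
  · filter_upwards [eventually_ge_atTop (1:ℝ)] with u hu
    have kb := (key_bounds hκ hα0 hα1 hu).2
    have he : 2*(2*α-1)+1 = P := by rw [hP_def]; ring
    rw [he] at kb
    have hup : 0 < u ^ P := Real.rpow_pos_of_pos (by linarith) _
    exact (div_le_div_iff_of_pos_right hup).mpr kb

include hκ hα0 hα1 in
lemma gdiv_limit : Tendsto (fun u : ℝ => gfun κ α u / u) atTop (nhds 1) := by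
  have hP : (0:ℝ) < 2 - (4*α-1) + (4*α-1) := by linarith
  have t3 : Tendsto (fun u : ℝ => u ^ ((4*α-1) - 1)) atTop (nhds 0) := by
    have h : (4*α-1) - 1 = -(2 - 4*α) := by ring
    rw [h]; exact tendsto_rpow_neg_atTop (by linarith)
  have hev : ∀ᶠ u : ℝ in atTop,
      1 + ((gfun κ α u - u) / u ^ (4*α-1)) * u ^ ((4*α-1)-1) = gfun κ α u / u := by
    filter_upwards [eventually_gt_atTop (0:ℝ)] with u hu
    have h1 : u ^ ((4*α-1):ℝ) = u ^ ((4*α-1)-1) * u := by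
      rw [← Real.rpow_add_one (ne_of_gt hu)]; ring_nf
    have h2 : u ^ (((4*α-1):ℝ)-1) ≠ 0 := ne_of_gt (Real.rpow_pos_of_pos hu _)
    rw [h1]
    field_simp
    ring
  apply Tendsto.congr' hev
  have : Tendsto (fun u : ℝ => 1 + ((gfun κ α u - u) / u ^ (4*α-1)) * u ^ ((4*α-1)-1)) atTop
      (nhds (1 + (κ*α^2/(4*α-1)) * 0)) :=
    ((glimit hκ hα0 hα1).mul t3).const_add 1
  simpa using this

end

theorem stmt14 (κ α : ℝ) (hκ : 0 < κ) (hα0 : 1/4 < α) (hα1 : α < 1/2) (h : ℝ → ℝ)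
    (hinv1 : Function.LeftInverse h (gfun κ α)) (hinv2 : Function.RightInverse h (gfun κ α)) :
    Filter.Tendsto (fun t : ℝ => (t - h t) / t ^ (4*α-1)) Filter.atTop
      (nhds (κ*α^2/(4*α-1))) := by
  have hmap := map_gfun hκ hα0 hα1 h hinv2
  rw [← hmap, tendsto_map'_iff]
  have hden : Tendsto (fun u : ℝ => (gfun κ α u / u) ^ ((4:ℝ)*α-1)) atTop (nhds 1) := by
    have := (gdiv_limit hκ hα0 hα1).rpow_const (p := 4*α-1) (Or.inl one_ne_zero)
    simpa using this
  have hmain : Tendsto (fun u : ℝ =>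
      ((gfun κ α u - u) / u ^ (4*α-1)) / ((gfun κ α u / u) ^ ((4:ℝ)*α-1))) atTop
      (nhds (κ*α^2/(4*α-1))) := by
    have := (glimit hκ hα0 hα1).div hden one_ne_zero
    simpa only [div_one, Pi.div_def] using this
  apply Tendsto.congr' _ hmain
  filter_upwards [eventually_ge_atTop (1:ℝ)] with u hu
  have hu0 : (0:ℝ) < u := by linarith
  have hg : u ≤ gfun κ α u := gfun_ge hκ hα0 hα1 hu0.le
  have hg0 : 0 < gfun κ α u := lt_of_lt_of_le hu0 hg
  have hdiv : (gfun κ α u / u) ^ ((4:ℝ)*α-1) = (gfun κ α u) ^ ((4:ℝ)*α-1) / u ^ ((4:ℝ)*α-1) :=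
    Real.div_rpow hg0.le hu0.le _
  have hup : (0:ℝ) < u ^ ((4:ℝ)*α-1) := Real.rpow_pos_of_pos hu0 _
  have hgp : (0:ℝ) < (gfun κ α u) ^ ((4:ℝ)*α-1) := Real.rpow_pos_of_pos hg0 _
  show ((gfun κ α u - u) / u ^ (4*α-1)) / ((gfun κ α u / u) ^ ((4:ℝ)*α-1))
      = (gfun κ α u - h (gfun κ α u)) / (gfun κ α u) ^ (4*α-1)
  rw [hinv1 u, hdiv]
  field_simp
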